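/- Let d be a positive integer, T > 0, c > 0, C > 0, C̄ > 0 and γ ∈ (0,1]. Let H and p̃ be measurable kernels on ([0,T]×ℝ^d) × ([0,T]×ℝ^d) such that for all 0 ≤ s' < s ≤ T and y', y ∈ ℝ^d: |H(s',y';s,y)| ≤ C (s-s')^{γ/2-1} p̂_c(s',y';s,y) and |p̃(s',y';s,y)| ≤ C̄ p̂_c(s',y';s,y). Define the iterated kernels H^{⊗1} = H and H^{⊗(k+1)}(s',y';s,y) = ∫_{s'}^s ∫_{ℝ^d} H^{⊗k}(r,u;s,y) H(s',y';r,u) du dr. Then for all 0 ≤ s' < s ≤ T and y', y ∈ ℝ^d, the series ∑_{k=1}^∞ ∫_{s'}^s ∫_{ℝ^d} |H^{⊗k}(r,u;s,y)| · |p̃(s',y';r,u)| du dr converges, and there exists a constant C' > 0, depending only on d, c, C, C̄, γ and T, such that |p̃(s',y';s,y) + ∑_{k=1}^∞ ∫_{s'}^s ∫_{ℝ^d} H^{⊗k}(r,u;s,y) p̃(s',y';r,u) du dr| ≤ C' p̂_c(s',y';s,y). -/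

import Mathlib

open MeasureTheory Real Filter intervalIntegral Set Topology
open scoped RealInnerProductSpace

set_option maxHeartbeats 1000000

/-- The Gaussian-type kernel `p̂_c(t,x;s,y) = c (s-t)^{-d/2} exp(-c|y-x|²/(s-t))`. -/
noncomputable def phat (d : ℕ) (c t s : ℝ) (x y : EuclideanSpace ℝ (Fin d)) : ℝ :=
  c * (s - t) ^ (-(d : ℝ) / 2) * Real.exp (-c * ‖y - x‖ ^ 2 / (s - t))

section auxiliary

noncomputable def psiAux (b a : ℝ) : ℝ :=
  if a ≤ 1 then 2 * (1 / b + 1 / a) else (1 / b + 1) * a ^ (-b)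

lemma psiAux_pos {b a : ℝ} (hb : 0 < b) (ha : 0 < a) : 0 < psiAux b a := by
  unfold psiAux; split <;> positivity

noncomputable def Acoef (C K b : ℝ) : ℕ → ℝ
  | 0 => C
  | k + 1 => Acoef C K b k * (C * K * psiAux b (((k : ℝ) + 1) * b))

lemma Acoef_pos {C K b : ℝ} (hC : 0 < C) (hK : 0 < K) (hb : 0 < b) :
    ∀ k, 0 < Acoef C K b k := by
  intro k
  induction k with
  | zero => simpa [Acoef] using hC
  | succ k ih =>
      have hψ : 0 < psiAux b (((k : ℝ) + 1) * b) := psiAux_pos hb (by positivity)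
      simp only [Acoef]
      positivity

lemma tsimple {e s' s : ℝ} (he : -1 < e) (hss : s' < s) :
    IntervalIntegrable (fun r => (s - r) ^ e) volume s' s ∧
    (∫ r in s'..s, (s - r) ^ e) = (s - s') ^ (e + 1) / (e + 1) := by
  constructor
  · have h := (intervalIntegrable_rpow' (a := 0) (b := s - s') he).comp_sub_left s
    simpa using h.symm
  · rw [intervalIntegral.integral_comp_sub_left (fun t => t ^ e) s]
    rw [sub_self, integral_rpow (Or.inl he)]
    rw [Real.zero_rpow (by linarith : e + 1 ≠ 0)]
    ring

lemma tcore {α βv s' s θ M : ℝ} (hα : 0 < α) (hβ : 0 < βv) (hβ1 : βv ≤ 1) (hss : s' < s)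
    (hθ0 : 0 < θ) (hθ1 : θ < 1) (hM0 : 0 ≤ M)
    (hM : ∀ r ∈ Set.Icc s' (s' + θ * (s - s')), (s - r) ^ (α - 1) ≤ M) :
    IntervalIntegrable (fun r => (s - r) ^ (α - 1) * (r - s') ^ (βv - 1)) volume s' s ∧
    (∫ r in s'..s, (s - r) ^ (α - 1) * (r - s') ^ (βv - 1))
      ≤ M * ((θ * (s - s')) ^ βv / βv)
        + (θ * (s - s')) ^ (βv - 1) * ((s - s') ^ α / α) := by
  have hΔ0 : 0 < s - s' := sub_pos.2 hss
  set rm := s' + θ * (s - s') with hrm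
  have h1 : s' < rm := by nlinarith
  have h2 : rm < s := by nlinarith
  -- integrability on first piece
  have int1 : IntervalIntegrable (fun r => (r - s') ^ (βv - 1)) volume s' rm := by
    have h := (intervalIntegrable_rpow' (a := s' - s') (b := rm - s')
      (by linarith : (-1:ℝ) < βv - 1)).comp_sub_right s'
    simpa using h
  have cont1 : ContinuousOn (fun r => (s - r) ^ (α - 1)) (Set.uIcc s' rm) := by
    apply ContinuousOn.rpow_const (continuous_const.sub continuous_id).continuousOn
    intro r hr
    rw [Set.uIcc_of_le h1.le] at hr
    left
    have : (0:ℝ) < s - r := by linarith [hr.2]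
    exact ne_of_gt this
  have I1 : IntervalIntegrable (fun r => (s - r) ^ (α - 1) * (r - s') ^ (βv - 1))
      volume s' rm := int1.continuousOn_mul cont1
  -- integrability on second piece
  have int2 : IntervalIntegrable (fun r => (s - r) ^ (α - 1)) volume rm s := by
    have h := (intervalIntegrable_rpow' (a := s - rm) (b := s - s)
      (by linarith : (-1:ℝ) < α - 1)).comp_sub_left s
    simpa using h
  have cont2 : ContinuousOn (fun r => (r - s') ^ (βv - 1)) (Set.uIcc rm s) := by
    apply ContinuousOn.rpow_const (continuous_id.sub continuous_const).continuousOn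
    intro r hr
    rw [Set.uIcc_of_le h2.le] at hr
    left
    have : (0:ℝ) < r - s' := by linarith [hr.1]
    exact ne_of_gt this
  have I2 : IntervalIntegrable (fun r => (s - r) ^ (α - 1) * (r - s') ^ (βv - 1))
      volume rm s := int2.mul_continuousOn cont2
  refine ⟨I1.trans I2, ?_⟩
  rw [← intervalIntegral.integral_add_adjacent_intervals I1 I2]
  have b1 : (∫ r in s'..rm, (s - r) ^ (α - 1) * (r - s') ^ (βv - 1))
      ≤ M * ((θ * (s - s')) ^ βv / βv) := by
    have mono : (∫ r in s'..rm, (s - r) ^ (α - 1) * (r - s') ^ (βv - 1))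
        ≤ ∫ r in s'..rm, M * (r - s') ^ (βv - 1) := by
      apply intervalIntegral.integral_mono_on h1.le I1 (int1.const_mul M)
      intro r hr
      exact mul_le_mul_of_nonneg_right (hM r ⟨hr.1, hr.2⟩)
        (Real.rpow_nonneg (by linarith [hr.1]) _)
    refine mono.trans_eq ?_
    rw [intervalIntegral.integral_const_mul]
    congr 1
    rw [intervalIntegral.integral_comp_sub_right (fun t => t ^ (βv - 1)) s']
    have hend : rm - s' = θ * (s - s') := by rw [hrm]; ring
    rw [sub_self, hend, integral_rpow (Or.inl (by linarith : (-1:ℝ) < βv - 1))]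
    rw [Real.zero_rpow (by linarith : βv - 1 + 1 ≠ 0), sub_add_cancel, sub_zero]
  have b2 : (∫ r in rm..s, (s - r) ^ (α - 1) * (r - s') ^ (βv - 1))
      ≤ (θ * (s - s')) ^ (βv - 1) * ((s - s') ^ α / α) := by
    have hθΔ : 0 < θ * (s - s') := by positivity
    have mono : (∫ r in rm..s, (s - r) ^ (α - 1) * (r - s') ^ (βv - 1))
        ≤ ∫ r in rm..s, (θ * (s - s')) ^ (βv - 1) * (s - r) ^ (α - 1) := by
      apply intervalIntegral.integral_mono_on h2.le I2 (int2.const_mul _)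
      intro r hr
      have hrr : θ * (s - s') ≤ r - s' := by
        have := hr.1; rw [hrm] at this; linarith
      have hle := Real.rpow_le_rpow_of_nonpos hθΔ hrr (by linarith : βv - 1 ≤ 0)
      calc (s - r) ^ (α - 1) * (r - s') ^ (βv - 1)
          ≤ (s - r) ^ (α - 1) * (θ * (s - s')) ^ (βv - 1) :=
            mul_le_mul_of_nonneg_left hle (Real.rpow_nonneg (by linarith [hr.2]) _)
        _ = (θ * (s - s')) ^ (βv - 1) * (s - r) ^ (α - 1) := mul_comm _ _
    refine mono.trans ?_
    rw [intervalIntegral.integral_const_mul]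
    have hcomp : (∫ r in rm..s, (s - r) ^ (α - 1)) = ((1 - θ) * (s - s')) ^ α / α := by
      rw [intervalIntegral.integral_comp_sub_left (fun t => t ^ (α - 1)) s]
      have hend : s - rm = (1 - θ) * (s - s') := by rw [hrm]; ring
      rw [sub_self, hend, integral_rpow (Or.inl (by linarith : (-1:ℝ) < α - 1))]
      rw [Real.zero_rpow (by linarith : α - 1 + 1 ≠ 0), sub_add_cancel, sub_zero]
    rw [hcomp]
    apply mul_le_mul_of_nonneg_left ?_ (Real.rpow_nonneg hθΔ.le _)
    rw [div_le_div_iff_of_pos_right hα]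
    exact Real.rpow_le_rpow (by nlinarith) (by nlinarith) hα.le
  linarith [b1, b2]

lemma half_rpow_le_two {e : ℝ} (he : -1 ≤ e) : ((1:ℝ)/2) ^ e ≤ 2 := by
  rw [one_div, Real.inv_rpow (by norm_num : (0:ℝ) ≤ 2)]
  have h1 : (2:ℝ) ^ (-1:ℝ) ≤ (2:ℝ) ^ e :=
    Real.rpow_le_rpow_of_exponent_le (by norm_num) he
  have h2 : (2:ℝ) ^ (-1:ℝ) = 1/2 := by rw [Real.rpow_neg_one]; norm_num
  have h3 : (0:ℝ) < (2:ℝ) ^ e := Real.rpow_pos_of_pos (by norm_num) _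
  rw [h2] at h1
  calc ((2:ℝ) ^ e)⁻¹ ≤ ((1:ℝ)/2)⁻¹ := by
        apply inv_anti₀ (by norm_num) h1
    _ = 2 := by norm_num

lemma tbound {α βv s' s : ℝ} (hα : 0 < α) (hβ : 0 < βv) (hβ1 : βv ≤ 1) (hss : s' < s) :
    IntervalIntegrable (fun r => (s - r) ^ (α - 1) * (r - s') ^ (βv - 1)) volume s' s ∧
    (∫ r in s'..s, (s - r) ^ (α - 1) * (r - s') ^ (βv - 1))
      ≤ psiAux βv α * (s - s') ^ (α + βv - 1) := by
  have hΔ0 : (0:ℝ) < s - s' := sub_pos.2 hss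
  set X := (s - s') ^ (α + βv - 1) with hX
  have hX0 : 0 < X := Real.rpow_pos_of_pos hΔ0 _
  by_cases hα1 : α ≤ 1
  · have hhalf : (0:ℝ) < (1/2 : ℝ) * (s - s') := by linarith
    have hM : ∀ r ∈ Set.Icc s' (s' + (1/2 : ℝ) * (s - s')),
        (s - r) ^ (α - 1) ≤ ((1/2 : ℝ) * (s - s')) ^ (α - 1) := fun r hr =>
      Real.rpow_le_rpow_of_nonpos hhalf (by linarith [hr.2]) (by linarith)
    obtain ⟨II, hb⟩ := tcore hα hβ hβ1 hss (by norm_num) (by norm_num)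
      (Real.rpow_nonneg (by linarith) _) hM
    refine ⟨II, hb.trans ?_⟩
    set P1 := ((1:ℝ)/2) ^ (α + βv - 1) with hP1
    set P2 := ((1:ℝ)/2) ^ (βv - 1) with hP2
    have key : ((1/2 : ℝ) * (s - s')) ^ (α - 1) * (((1/2 : ℝ) * (s - s')) ^ βv / βv)
          + ((1/2 : ℝ) * (s - s')) ^ (βv - 1) * ((s - s') ^ α / α)
        = P1 * X / βv + P2 * X / α := by
      have e1 : ((1/2 : ℝ) * (s - s')) ^ (α - 1) * ((1/2 : ℝ) * (s - s')) ^ βv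
          = P1 * X := by
        rw [← Real.rpow_add hhalf, hP1, hX,
          ← Real.mul_rpow (by norm_num : (0:ℝ) ≤ 1/2) hΔ0.le]
        ring_nf
      have e2 : ((1/2 : ℝ) * (s - s')) ^ (βv - 1) * (s - s') ^ α = P2 * X := by
        rw [Real.mul_rpow (by norm_num : (0:ℝ) ≤ 1/2) hΔ0.le, hP2, hX, mul_assoc,
          ← Real.rpow_add hΔ0]
        ring_nf
      rw [← e1, ← e2]; ring
    rw [key, psiAux, if_pos hα1]
    have hp1 : P1 ≤ 2 := half_rpow_le_two (by linarith)
    have hp2 : P2 ≤ 2 := half_rpow_le_two (by linarith)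
    have hP10 : 0 ≤ P1 := Real.rpow_nonneg (by norm_num) _
    have hP20 : 0 ≤ P2 := Real.rpow_nonneg (by norm_num) _
    have t1 : P1 * X / βv ≤ 2 * X / βv := by gcongr
    have t2 : P2 * X / α ≤ 2 * X / α := by gcongr
    have : 2 * X / βv + 2 * X / α = 2 * (1 / βv + 1 / α) * X := by
      field_simp
    linarith
  · push_neg at hα1
    have hinv0 : (0:ℝ) < α⁻¹ := inv_pos.2 hα
    have hinv1 : α⁻¹ < 1 := inv_lt_one_of_one_lt₀ hα1
    have hM : ∀ r ∈ Set.Icc s' (s' + α⁻¹ * (s - s')),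
        (s - r) ^ (α - 1) ≤ (s - s') ^ (α - 1) := by
      intro r hr
      have h1 : α⁻¹ * (s - s') ≤ s - s' := by nlinarith
      exact Real.rpow_le_rpow (by nlinarith [hr.2]) (by linarith [hr.1]) (by linarith)
    obtain ⟨II, hb⟩ := tcore hα hβ hβ1 hss hinv0 hinv1
      (Real.rpow_nonneg hΔ0.le _) hM
    refine ⟨II, hb.trans ?_⟩
    rw [psiAux, if_neg (not_le.2 hα1)]
    have einv : ∀ e : ℝ, (α⁻¹) ^ e = α ^ (-e) := by
      intro e; rw [Real.inv_rpow hα.le, Real.rpow_neg hα.le]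
    have h1 : (α⁻¹ * (s - s')) ^ βv = α ^ (-βv) * (s - s') ^ βv := by
      rw [Real.mul_rpow hinv0.le hΔ0.le, einv]
    have h2 : (α⁻¹ * (s - s')) ^ (βv - 1) = α ^ (-(βv - 1)) * (s - s') ^ (βv - 1) := by
      rw [Real.mul_rpow hinv0.le hΔ0.le, einv]
    have h3 : (s - s') ^ (α - 1) * (s - s') ^ βv = X := by
      rw [← Real.rpow_add hΔ0, hX]; ring_nf
    have h4 : (s - s') ^ (βv - 1) * (s - s') ^ α = X := by
      rw [← Real.rpow_add hΔ0, hX]; ring_nf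
    have h5 : α ^ (-(βv - 1)) * α⁻¹ = α ^ (-βv) := by
      rw [← Real.rpow_neg_one α, ← Real.rpow_add hα]; ring_nf
    apply le_of_eq
    rw [h1, h2]
    calc (s - s') ^ (α - 1) * (α ^ (-βv) * (s - s') ^ βv / βv)
          + α ^ (-(βv - 1)) * (s - s') ^ (βv - 1) * ((s - s') ^ α / α)
        = ((s - s') ^ (α - 1) * (s - s') ^ βv) * α ^ (-βv) / βv
          + (α ^ (-(βv - 1)) * α⁻¹) * ((s - s') ^ (βv - 1) * (s - s') ^ α) := by
          ring
      _ = X * α ^ (-βv) / βv + α ^ (-βv) * X := by rw [h3, h4, h5]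
      _ = (1 / βv + 1) * α ^ (-βv) * X := by ring

variable {d : ℕ}

lemma gauss_int {b : ℝ} (hb : 0 < b) :
    ∫ u : EuclideanSpace ℝ (Fin d), Real.exp (-(b * ‖u‖ ^ 2)) = (π / b) ^ ((d : ℝ) / 2) := by
  have h := GaussianFourier.integral_rexp_neg_mul_sq_norm (V := EuclideanSpace ℝ (Fin d)) hb
  simpa [finrank_euclideanSpace_fin, neg_mul] using h

lemma gauss_integrable {b : ℝ} (hb : 0 < b) :
    Integrable (fun u : EuclideanSpace ℝ (Fin d) => Real.exp (-(b * ‖u‖ ^ 2))) := by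
  have h := (GaussianFourier.integrable_cexp_neg_mul_sq_norm_add (V := EuclideanSpace ℝ (Fin d))
      (b := (b : ℂ)) (by simpa using hb) 0 0).norm
  refine h.congr (Eventually.of_forall fun v => ?_)
  show ‖Complex.exp _‖ = _
  rw [Complex.norm_exp]
  congr 1
  simp only [Complex.add_re, Complex.mul_re, Complex.neg_re, Complex.ofReal_re,
    Complex.neg_im, Complex.ofReal_im, Complex.zero_re, Complex.zero_im]
  rw [← Complex.ofReal_pow, Complex.ofReal_re, Complex.ofReal_im]
  ring

lemma sq_expand {a b : ℝ} (ha : 0 < a) (hb : 0 < b) (y y' u : EuclideanSpace ℝ (Fin d)) :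
    a * ‖y - u‖ ^ 2 + b * ‖u - y'‖ ^ 2
      = (a + b) * ‖u - (a + b)⁻¹ • (a • y + b • y')‖ ^ 2
        + a * b / (a + b) * ‖y - y'‖ ^ 2 := by
  have hab : a + b ≠ 0 := by positivity
  have h1 : ∀ v w : EuclideanSpace ℝ (Fin d),
      ‖v - w‖ ^ 2 = ‖v‖ ^ 2 - 2 * ⟪v, w⟫ + ‖w‖ ^ 2 := fun v w => norm_sub_sq_real v w
  rw [h1, h1, h1, h1]
  have hm : ⟪u, (a + b)⁻¹ • (a • y + b • y')⟫
      = (a + b)⁻¹ * (a * ⟪u, y⟫ + b * ⟪u, y'⟫) := by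
    rw [real_inner_smul_right, inner_add_right, real_inner_smul_right, real_inner_smul_right]
  have hnm : ‖(a + b)⁻¹ • (a • y + b • y')‖ ^ 2
      = (a + b)⁻¹ ^ 2 * (a ^ 2 * ‖y‖ ^ 2 + 2 * (a * b) * ⟪y, y'⟫ + b ^ 2 * ‖y'‖ ^ 2) := by
    rw [← real_inner_self_eq_norm_sq]
    rw [real_inner_smul_left, real_inner_smul_right]
    rw [inner_add_left, inner_add_right, inner_add_right]
    rw [real_inner_smul_left, real_inner_smul_left, real_inner_smul_left, real_inner_smul_left,
      real_inner_smul_right, real_inner_smul_right, real_inner_smul_right, real_inner_smul_right]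
    rw [real_inner_self_eq_norm_sq, real_inner_self_eq_norm_sq, real_inner_comm y' y]
    ring
  rw [hm, hnm]
  have hyu : ⟪y, u⟫ = ⟪u, y⟫ := real_inner_comm _ _
  rw [hyu]
  field_simp
  ring

lemma gauss_pt {a b : ℝ} (ha : 0 < a) (hb : 0 < b) (y y' u : EuclideanSpace ℝ (Fin d)) :
    Real.exp (-(a * ‖y - u‖ ^ 2)) * Real.exp (-(b * ‖u - y'‖ ^ 2))
      = Real.exp (-((a + b) * ‖u - (a + b)⁻¹ • (a • y + b • y')‖ ^ 2))
          * Real.exp (-(a * b / (a + b) * ‖y - y'‖ ^ 2)) := by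
  rw [← Real.exp_add, ← Real.exp_add]
  congr 1
  have := sq_expand ha hb y y' u
  linarith

lemma gauss_conv_integrable {a b : ℝ} (ha : 0 < a) (hb : 0 < b)
    (y y' : EuclideanSpace ℝ (Fin d)) :
    Integrable (fun u : EuclideanSpace ℝ (Fin d) =>
      Real.exp (-(a * ‖y - u‖ ^ 2)) * Real.exp (-(b * ‖u - y'‖ ^ 2))) := by
  have hfun : (fun u : EuclideanSpace ℝ (Fin d) =>
        Real.exp (-(a * ‖y - u‖ ^ 2)) * Real.exp (-(b * ‖u - y'‖ ^ 2)))
      = fun u => Real.exp (-((a + b) * ‖u - (a + b)⁻¹ • (a • y + b • y')‖ ^ 2))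
          * Real.exp (-(a * b / (a + b) * ‖y - y'‖ ^ 2)) :=
    funext fun u => gauss_pt ha hb y y' u
  rw [hfun]
  exact ((gauss_integrable (by positivity : (0:ℝ) < a + b)).comp_sub_right
    ((a + b)⁻¹ • (a • y + b • y'))).mul_const _

lemma gauss_conv {a b : ℝ} (ha : 0 < a) (hb : 0 < b) (y y' : EuclideanSpace ℝ (Fin d)) :
    (∫ u : EuclideanSpace ℝ (Fin d),
        Real.exp (-(a * ‖y - u‖ ^ 2)) * Real.exp (-(b * ‖u - y'‖ ^ 2)))
      = (π / (a + b)) ^ ((d : ℝ) / 2) * Real.exp (-(a * b / (a + b) * ‖y - y'‖ ^ 2)) := by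
  have hfun : (fun u : EuclideanSpace ℝ (Fin d) =>
        Real.exp (-(a * ‖y - u‖ ^ 2)) * Real.exp (-(b * ‖u - y'‖ ^ 2)))
      = fun u => Real.exp (-((a + b) * ‖u - (a + b)⁻¹ • (a • y + b • y')‖ ^ 2))
          * Real.exp (-(a * b / (a + b) * ‖y - y'‖ ^ 2)) :=
    funext fun u => gauss_pt ha hb y y' u
  rw [hfun, MeasureTheory.integral_mul_const]
  congr 1
  rw [integral_sub_right_eq_self
    (fun u : EuclideanSpace ℝ (Fin d) => Real.exp (-((a + b) * ‖u‖ ^ 2)))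
    ((a + b)⁻¹ • (a • y + b • y'))]
  exact gauss_int (by positivity)

lemma phat_pos {c t s : ℝ} (hc : 0 < c) (hts : t < s) (x y : EuclideanSpace ℝ (Fin d)) :
    0 < phat d c t s x y := by
  unfold phat
  have : (0:ℝ) < s - t := by linarith
  positivity

lemma phat_convol {c s' r s : ℝ} (hc : 0 < c) (h1 : s' < r) (h2 : r < s)
    (y' y : EuclideanSpace ℝ (Fin d)) :
    Integrable (fun u : EuclideanSpace ℝ (Fin d) => phat d c r s u y * phat d c s' r y' u) ∧
    (∫ u : EuclideanSpace ℝ (Fin d), phat d c r s u y * phat d c s' r y' u)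
      = (c * (π / c) ^ ((d : ℝ) / 2)) * phat d c s' s y' y := by
  have hsr : (0:ℝ) < s - r := by linarith
  have hrs' : (0:ℝ) < r - s' := by linarith
  have hss' : (0:ℝ) < s - s' := by linarith
  set a := c / (s - r) with haa
  set b := c / (r - s') with hbb
  have ha : 0 < a := by positivity
  have hb : 0 < b := by positivity
  have hfun : (fun u : EuclideanSpace ℝ (Fin d) => phat d c r s u y * phat d c s' r y' u)
      = fun u => (c * (s - r) ^ (-(d : ℝ) / 2) * (c * (r - s') ^ (-(d : ℝ) / 2)))
          * (Real.exp (-(a * ‖y - u‖ ^ 2)) * Real.exp (-(b * ‖u - y'‖ ^ 2))) := by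
    funext u
    unfold phat
    have ea : -c * ‖y - u‖ ^ 2 / (s - r) = -(a * ‖y - u‖ ^ 2) := by
      rw [haa]; field_simp
    have eb : -c * ‖u - y'‖ ^ 2 / (r - s') = -(b * ‖u - y'‖ ^ 2) := by
      rw [hbb]; field_simp
    rw [ea, eb]; ring
  constructor
  · rw [hfun]
    exact (gauss_conv_integrable ha hb y y').const_mul _
  · rw [hfun, MeasureTheory.integral_const_mul, gauss_conv ha hb y y']
    have h1' : s - r ≠ 0 := ne_of_gt hsr
    have h2' : r - s' ≠ 0 := ne_of_gt hrs'
    have h3' : c ≠ 0 := ne_of_gt hc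
    have hzxy : s - s' = (s - r) + (r - s') := by ring
    have h5 : a + b = c * (s - s') / ((s - r) * (r - s')) := by
      rw [haa, hbb, hzxy]; field_simp; ring
    have hab : a * b / (a + b) = c / (s - s') := by
      rw [haa, hbb, h5, div_mul_div_comm, div_div_div_eq,
        div_eq_div_iff (by positivity) (by positivity)]
      ring
    have hpi : π / (a + b) = (π / c) * ((s - r) * ((r - s') * (s - s')⁻¹)) := by
      rw [h5, div_div_eq_mul_div]
      field_simp
    have hr1 : (π / (a + b)) ^ ((d : ℝ) / 2)
        = (π / c) ^ ((d : ℝ) / 2) * ((s - r) ^ ((d : ℝ) / 2)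
            * ((r - s') ^ ((d : ℝ) / 2) * ((s - s')⁻¹) ^ ((d : ℝ) / 2))) := by
      rw [hpi, Real.mul_rpow (by positivity) (by positivity),
        Real.mul_rpow (by positivity) (by positivity),
        Real.mul_rpow (by positivity) (by positivity)]
    have hr2 : ((s - s')⁻¹) ^ ((d : ℝ) / 2) = (s - s') ^ (-(d : ℝ) / 2) := by
      rw [Real.inv_rpow hss'.le, ← Real.rpow_neg hss'.le, neg_div]
    have hc1 : (s - r) ^ (-(d : ℝ) / 2) * (s - r) ^ ((d : ℝ) / 2) = 1 := by
      rw [← Real.rpow_add hsr, show -(d:ℝ)/2 + (d:ℝ)/2 = 0 by ring, Real.rpow_zero]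
    have hc2 : (r - s') ^ (-(d : ℝ) / 2) * (r - s') ^ ((d : ℝ) / 2) = 1 := by
      rw [← Real.rpow_add hrs', show -(d:ℝ)/2 + (d:ℝ)/2 = 0 by ring, Real.rpow_zero]
    have hexp : Real.exp (-(a * b / (a + b) * ‖y - y'‖ ^ 2))
        = Real.exp (-c * ‖y - y'‖ ^ 2 / (s - s')) := by
      rw [hab]; congr 1; ring
    rw [hr1, hr2, hexp]
    unfold phat
    calc c * (s - r) ^ (-(d:ℝ) / 2) * (c * (r - s') ^ (-(d:ℝ) / 2))
        * ((π / c) ^ ((d:ℝ) / 2) * ((s - r) ^ ((d:ℝ) / 2)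
            * ((r - s') ^ ((d:ℝ) / 2) * (s - s') ^ (-(d:ℝ) / 2)))
          * Real.exp (-c * ‖y - y'‖ ^ 2 / (s - s')))
        = ((s - r) ^ (-(d:ℝ) / 2) * (s - r) ^ ((d:ℝ) / 2))
            * ((r - s') ^ (-(d:ℝ) / 2) * (r - s') ^ ((d:ℝ) / 2))
            * (c * (π / c) ^ ((d:ℝ) / 2)
              * (c * (s - s') ^ (-(d:ℝ) / 2) * Real.exp (-c * ‖y - y'‖ ^ 2 / (s - s')))) := by
          ring
      _ = c * (π / c) ^ ((d:ℝ) / 2)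
            * (c * (s - s') ^ (-(d:ℝ) / 2) * Real.exp (-c * ‖y - y'‖ ^ 2 / (s - s'))) := by
          rw [hc1, hc2]; ring

end auxiliary

/-- Convergence and Gaussian bound for the parametrix series
`p̃ + ∑_{k≥1} ∫∫ H^{⊗k} p̃`. -/
theorem parametrix_expansion_bound (d : ℕ) (hd : 0 < d) (T c C Cbar γ : ℝ)
    (hT : 0 < T) (hc : 0 < c) (hC : 0 < C) (hCbar : 0 < Cbar)
    (hγ : γ ∈ Set.Ioc (0:ℝ) 1)
    (H ptil : ℝ → EuclideanSpace ℝ (Fin d) → ℝ → EuclideanSpace ℝ (Fin d) → ℝ)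
    (hHmeas : Measurable
      (fun p : (ℝ × EuclideanSpace ℝ (Fin d)) × ℝ × EuclideanSpace ℝ (Fin d) =>
        H p.1.1 p.1.2 p.2.1 p.2.2))
    (hptilmeas : Measurable
      (fun p : (ℝ × EuclideanSpace ℝ (Fin d)) × ℝ × EuclideanSpace ℝ (Fin d) =>
        ptil p.1.1 p.1.2 p.2.1 p.2.2))
    (hH : ∀ s' s : ℝ, 0 ≤ s' → s' < s → s ≤ T → ∀ y' y : EuclideanSpace ℝ (Fin d),
      |H s' y' s y| ≤ C * (s - s') ^ (γ / 2 - 1) * phat d c s' s y' y)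
    (hptil : ∀ s' s : ℝ, 0 ≤ s' → s' < s → s ≤ T → ∀ y' y : EuclideanSpace ℝ (Fin d),
      |ptil s' y' s y| ≤ Cbar * phat d c s' s y' y)
    (Hk : ℕ → ℝ → EuclideanSpace ℝ (Fin d) → ℝ → EuclideanSpace ℝ (Fin d) → ℝ)
    (hHk1 : Hk 1 = H)
    (hHkrec : ∀ k : ℕ, 1 ≤ k → ∀ (s' s : ℝ) (y' y : EuclideanSpace ℝ (Fin d)),
      Hk (k + 1) s' y' s y = ∫ r in s'..s, ∫ u, Hk k r u s y * H s' y' r u) :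
    (∀ s' s : ℝ, 0 ≤ s' → s' < s → s ≤ T → ∀ y' y : EuclideanSpace ℝ (Fin d),
      Summable (fun k : ℕ =>
        ∫ r in s'..s, ∫ u, |Hk (k + 1) r u s y| * |ptil s' y' r u|)) ∧
    ∃ C' > (0:ℝ), ∀ s' s : ℝ, 0 ≤ s' → s' < s → s ≤ T →
      ∀ y' y : EuclideanSpace ℝ (Fin d),
        |ptil s' y' s y +
            ∑' k : ℕ, ∫ r in s'..s, ∫ u, Hk (k + 1) r u s y * ptil s' y' r u|
          ≤ C' * phat d c s' s y' y := by
  obtain ⟨hγ0, hγ1⟩ := hγ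
  have hβ0 : (0:ℝ) < γ / 2 := by linarith
  have hβ1 : γ / 2 ≤ 1 := by linarith
  set K : ℝ := c * (π / c) ^ ((d : ℝ) / 2) with hKdef
  have hK : 0 < K := by positivity
  set A : ℕ → ℝ := Acoef C K (γ / 2) with hAdef
  have hApos : ∀ k, 0 < A k := Acoef_pos hC hK hβ0
  -- Step 1: pointwise bound on the iterated kernels
  have hbd : ∀ k : ℕ, ∀ s' s : ℝ, 0 ≤ s' → s' < s → s ≤ T →
      ∀ y' y : EuclideanSpace ℝ (Fin d),
      |Hk (k + 1) s' y' s y|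
        ≤ A k * (s - s') ^ (((k : ℝ) + 1) * (γ / 2) - 1) * phat d c s' s y' y := by
    intro k
    induction k with
    | zero =>
        intro s' s h0 hss hsT y' y
        have h := hH s' s h0 hss hsT y' y
        have he : ((0 : ℕ) : ℝ) + 1 = 1 := by norm_num
        rw [hHk1]
        calc |H s' y' s y| ≤ C * (s - s') ^ (γ / 2 - 1) * phat d c s' s y' y := h
          _ = A 0 * (s - s') ^ ((((0:ℕ) : ℝ) + 1) * (γ / 2) - 1) * phat d c s' s y' y := by
              rw [show ((((0:ℕ) : ℝ) + 1) * (γ / 2) - 1) = γ / 2 - 1 by push_cast; ring]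
              rw [show A 0 = C from rfl]
    | succ k ih =>
        intro s' s h0 hss hsT y' y
        have hαk0 : (0:ℝ) < ((k : ℝ) + 1) * (γ / 2) := by positivity
        have hP : 0 < phat d c s' s y' y := phat_pos hc hss y' y
        -- inner bound
        have hG2 : ∀ r ∈ Set.Ioo s' s,
            ‖∫ u, Hk (k + 1) r u s y * H s' y' r u‖
              ≤ (A k * C * K * phat d c s' s y' y)
                  * ((s - r) ^ (((k : ℝ) + 1) * (γ / 2) - 1) * (r - s') ^ (γ / 2 - 1)) := by
          intro r hr
          obtain ⟨hr1, hr2⟩ := hr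
          have h0r : 0 ≤ r := le_trans h0 hr1.le
          have hrT : r ≤ T := le_trans hr2.le hsT
          have hconv := phat_convol hc hr1 hr2 y' y
          have hgint := hconv.1.const_mul
            (A k * (s - r) ^ (((k : ℝ) + 1) * (γ / 2) - 1) * (C * (r - s') ^ (γ / 2 - 1)))
          have hub := norm_integral_le_of_norm_le hgint (Eventually.of_forall (fun u => by
            rw [Real.norm_eq_abs, abs_mul]
            have e1 := ih r s h0r hr2 hsT u y
            have e2 := hH s' r h0 hr1 hrT y' u
            have p1 : (0:ℝ) ≤ phat d c r s u y := (phat_pos hc hr2 u y).le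
            have hb1 : (0:ℝ) ≤ A k * (s - r) ^ (((k : ℝ) + 1) * (γ / 2) - 1)
                * phat d c r s u y :=
              mul_nonneg (mul_nonneg (hApos k).le (Real.rpow_nonneg (by linarith) _)) p1
            calc |Hk (k + 1) r u s y| * |H s' y' r u|
                ≤ (A k * (s - r) ^ (((k : ℝ) + 1) * (γ / 2) - 1) * phat d c r s u y)
                    * (C * (r - s') ^ (γ / 2 - 1) * phat d c s' r y' u) :=
                  mul_le_mul e1 e2 (abs_nonneg _) hb1
              _ = (A k * (s - r) ^ (((k : ℝ) + 1) * (γ / 2) - 1)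
                    * (C * (r - s') ^ (γ / 2 - 1)))
                    * (phat d c r s u y * phat d c s' r y' u) := by ring))
          rw [MeasureTheory.integral_const_mul, hconv.2] at hub
          calc ‖∫ u, Hk (k + 1) r u s y * H s' y' r u‖
              ≤ A k * (s - r) ^ (((k : ℝ) + 1) * (γ / 2) - 1) * (C * (r - s') ^ (γ / 2 - 1))
                  * (c * (π / c) ^ ((d : ℝ) / 2) * phat d c s' s y' y) := hub
            _ = (A k * C * K * phat d c s' s y' y)
                  * ((s - r) ^ (((k : ℝ) + 1) * (γ / 2) - 1) * (r - s') ^ (γ / 2 - 1)) := by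
                rw [hKdef]; ring
        -- outer bound
        have hrec := hHkrec (k + 1) (Nat.le_add_left 1 k) s' s y' y
        have htb := tbound hαk0 hβ0 hβ1 hss
        have hGint : IntegrableOn
            (fun r => (A k * C * K * phat d c s' s y' y)
              * ((s - r) ^ (((k : ℝ) + 1) * (γ / 2) - 1) * (r - s') ^ (γ / 2 - 1)))
            (Set.Ioc s' s) volume := (htb.1.const_mul _).1
        have hae : ∀ᵐ r ∂(volume.restrict (Set.Ioc s' s)),
            ‖∫ u, Hk (k + 1) r u s y * H s' y' r u‖
              ≤ (A k * C * K * phat d c s' s y' y)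
                  * ((s - r) ^ (((k : ℝ) + 1) * (γ / 2) - 1) * (r - s') ^ (γ / 2 - 1)) := by
          have hmem : ∀ᵐ r ∂(volume.restrict (Set.Ioc s' s)), r ∈ Set.Ioc s' s :=
            ae_restrict_mem measurableSet_Ioc
          have hne : ∀ᵐ r ∂(volume.restrict (Set.Ioc s' s)), r ≠ s := by
            refine ae_restrict_of_ae ?_
            rw [ae_iff]
            have : {r : ℝ | ¬ r ≠ s} = {s} := by ext r; simp
            rw [this]
            exact Real.volume_singleton
          filter_upwards [hmem, hne] with r hrmem hrne
          exact hG2 r ⟨hrmem.1, lt_of_le_of_ne hrmem.2 hrne⟩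
        calc |Hk (k + 1 + 1) s' y' s y|
            = ‖∫ r in Set.Ioc s' s, (∫ u, Hk (k + 1) r u s y * H s' y' r u)‖ := by
              rw [hrec, intervalIntegral.integral_of_le hss.le, Real.norm_eq_abs]
          _ ≤ ∫ r in Set.Ioc s' s, (A k * C * K * phat d c s' s y' y)
                * ((s - r) ^ (((k : ℝ) + 1) * (γ / 2) - 1) * (r - s') ^ (γ / 2 - 1)) :=
              norm_integral_le_of_norm_le hGint hae
          _ = (A k * C * K * phat d c s' s y' y)
                * ∫ r in Set.Ioc s' s,
                    ((s - r) ^ (((k : ℝ) + 1) * (γ / 2) - 1) * (r - s') ^ (γ / 2 - 1)) :=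
              integral_const_mul _ _
          _ ≤ (A k * C * K * phat d c s' s y' y)
                * (psiAux (γ / 2) (((k : ℝ) + 1) * (γ / 2))
                    * (s - s') ^ (((k : ℝ) + 1) * (γ / 2) + γ / 2 - 1)) := by
              apply mul_le_mul_of_nonneg_left ?_
                (mul_nonneg (mul_nonneg (mul_nonneg (hApos k).le hC.le) hK.le) hP.le)
              rw [← intervalIntegral.integral_of_le hss.le]
              exact htb.2
          _ = A (k + 1) * (s - s') ^ ((((k + 1 : ℕ) : ℝ) + 1) * (γ / 2) - 1)
                * phat d c s' s y' y := by
              have hA1 : A (k + 1)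
                  = A k * (C * K * psiAux (γ / 2) (((k : ℝ) + 1) * (γ / 2))) := by
                rw [hAdef]; rfl
              have hexp : ((k : ℝ) + 1) * (γ / 2) + γ / 2 - 1
                  = (((k + 1 : ℕ) : ℝ) + 1) * (γ / 2) - 1 := by push_cast; ring
              rw [hA1, hexp]; ring
  -- Step 2: combined bounds for the convolution with ptil
  have hmain : ∀ k : ℕ, ∀ s' s : ℝ, 0 ≤ s' → s' < s → s ≤ T →
      ∀ y' y : EuclideanSpace ℝ (Fin d),
      (∫ r in s'..s, ∫ u, |Hk (k + 1) r u s y| * |ptil s' y' r u|)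
        ≤ (Cbar * K / (γ / 2)) * A k * (s - s') ^ (((k : ℝ) + 1) * (γ / 2))
            * phat d c s' s y' y
      ∧ |∫ r in s'..s, ∫ u, Hk (k + 1) r u s y * ptil s' y' r u|
        ≤ (Cbar * K / (γ / 2)) * A k * (s - s') ^ (((k : ℝ) + 1) * (γ / 2))
            * phat d c s' s y' y := by
    intro k s' s h0 hss hsT y' y
    have hαk0 : (0:ℝ) < ((k : ℝ) + 1) * (γ / 2) := by positivity
    have hP : 0 < phat d c s' s y' y := phat_pos hc hss y' y
    have hΔ0 : (0:ℝ) < s - s' := sub_pos.2 hss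
    -- inner bounds
    have hinner : ∀ r ∈ Set.Ioo s' s,
        (∫ u, |Hk (k + 1) r u s y| * |ptil s' y' r u|)
          ≤ (A k * Cbar * K * phat d c s' s y' y)
              * (s - r) ^ (((k : ℝ) + 1) * (γ / 2) - 1)
        ∧ ‖∫ u, Hk (k + 1) r u s y * ptil s' y' r u‖
          ≤ (A k * Cbar * K * phat d c s' s y' y)
              * (s - r) ^ (((k : ℝ) + 1) * (γ / 2) - 1) := by
      intro r hr
      obtain ⟨hr1, hr2⟩ := hr
      have h0r : 0 ≤ r := le_trans h0 hr1.le
      have hrT : r ≤ T := le_trans hr2.le hsT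
      have hconv := phat_convol hc hr1 hr2 y' y
      have hgint := hconv.1.const_mul
        (A k * (s - r) ^ (((k : ℝ) + 1) * (γ / 2) - 1) * Cbar)
      have hpt : ∀ u, |Hk (k + 1) r u s y| * |ptil s' y' r u|
          ≤ (A k * (s - r) ^ (((k : ℝ) + 1) * (γ / 2) - 1) * Cbar)
              * (phat d c r s u y * phat d c s' r y' u) := by
        intro u
        have e1 := hbd k r s h0r hr2 hsT u y
        have e2 := hptil s' r h0 hr1 hrT y' u
        have p1 : (0:ℝ) ≤ phat d c r s u y := (phat_pos hc hr2 u y).le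
        have hb1 : (0:ℝ) ≤ A k * (s - r) ^ (((k : ℝ) + 1) * (γ / 2) - 1)
            * phat d c r s u y :=
          mul_nonneg (mul_nonneg (hApos k).le (Real.rpow_nonneg (by linarith) _)) p1
        calc |Hk (k + 1) r u s y| * |ptil s' y' r u|
            ≤ (A k * (s - r) ^ (((k : ℝ) + 1) * (γ / 2) - 1) * phat d c r s u y)
                * (Cbar * phat d c s' r y' u) := mul_le_mul e1 e2 (abs_nonneg _) hb1
          _ = (A k * (s - r) ^ (((k : ℝ) + 1) * (γ / 2) - 1) * Cbar)
                * (phat d c r s u y * phat d c s' r y' u) := by ring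
      have hval : (∫ u, (A k * (s - r) ^ (((k : ℝ) + 1) * (γ / 2) - 1) * Cbar)
            * (phat d c r s u y * phat d c s' r y' u))
          = (A k * Cbar * K * phat d c s' s y' y)
              * (s - r) ^ (((k : ℝ) + 1) * (γ / 2) - 1) := by
        rw [MeasureTheory.integral_const_mul, hconv.2, hKdef]; ring
      constructor
      · have := integral_mono_of_nonneg
          (Eventually.of_forall (fun u => mul_nonneg (abs_nonneg _) (abs_nonneg _)))
          hgint (Eventually.of_forall hpt)
        rw [hval] at this
        exact this
      · have := norm_integral_le_of_norm_le hgint (Eventually.of_forall (fun u => by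
          rw [Real.norm_eq_abs, abs_mul]; exact hpt u))
        rw [hval] at this
        exact this
    -- outer bound
    have hsimple := tsimple (show (-1:ℝ) < ((k : ℝ) + 1) * (γ / 2) - 1 by linarith) hss
    have hGint : IntegrableOn
        (fun r => (A k * Cbar * K * phat d c s' s y' y)
          * (s - r) ^ (((k : ℝ) + 1) * (γ / 2) - 1)) (Set.Ioc s' s) volume :=
      (hsimple.1.const_mul _).1
    have htail : (∫ r in Set.Ioc s' s, (A k * Cbar * K * phat d c s' s y' y)
          * (s - r) ^ (((k : ℝ) + 1) * (γ / 2) - 1))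
        ≤ (Cbar * K / (γ / 2)) * A k * (s - s') ^ (((k : ℝ) + 1) * (γ / 2))
            * phat d c s' s y' y := by
      rw [MeasureTheory.integral_const_mul, ← intervalIntegral.integral_of_le hss.le, hsimple.2]
      rw [show ((k : ℝ) + 1) * (γ / 2) - 1 + 1 = ((k : ℝ) + 1) * (γ / 2) by ring]
      have hdiv : (s - s') ^ (((k : ℝ) + 1) * (γ / 2)) / (((k : ℝ) + 1) * (γ / 2))
          ≤ (s - s') ^ (((k : ℝ) + 1) * (γ / 2)) / (γ / 2) := by
        apply div_le_div_of_nonneg_left (Real.rpow_nonneg hΔ0.le _) hβ0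
        nlinarith [Nat.cast_nonneg (α := ℝ) k]
      calc (A k * Cbar * K * phat d c s' s y' y)
            * ((s - s') ^ (((k : ℝ) + 1) * (γ / 2)) / (((k : ℝ) + 1) * (γ / 2)))
          ≤ (A k * Cbar * K * phat d c s' s y' y)
            * ((s - s') ^ (((k : ℝ) + 1) * (γ / 2)) / (γ / 2)) := by
            apply mul_le_mul_of_nonneg_left hdiv
            exact mul_nonneg (mul_nonneg (mul_nonneg (hApos k).le hCbar.le) hK.le) hP.le
        _ = (Cbar * K / (γ / 2)) * A k * (s - s') ^ (((k : ℝ) + 1) * (γ / 2))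
              * phat d c s' s y' y := by ring
    have haeset : ∀ᵐ r ∂(volume.restrict (Set.Ioc s' s)), r ∈ Set.Ioo s' s := by
      have hmem : ∀ᵐ r ∂(volume.restrict (Set.Ioc s' s)), r ∈ Set.Ioc s' s :=
        ae_restrict_mem measurableSet_Ioc
      have hne : ∀ᵐ r ∂(volume.restrict (Set.Ioc s' s)), r ≠ s := by
        refine ae_restrict_of_ae ?_
        rw [ae_iff]
        have : {r : ℝ | ¬ r ≠ s} = {s} := by ext r; simp
        rw [this]
        exact Real.volume_singleton
      filter_upwards [hmem, hne] with r hrmem hrne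
      exact ⟨hrmem.1, lt_of_le_of_ne hrmem.2 hrne⟩
    constructor
    · rw [intervalIntegral.integral_of_le hss.le]
      refine le_trans (integral_mono_of_nonneg
        (Eventually.of_forall (fun r => integral_nonneg
          (fun u => mul_nonneg (abs_nonneg _) (abs_nonneg _))))
        hGint ?_) htail
      filter_upwards [haeset] with r hrmem
      exact (hinner r hrmem).1
    · calc |∫ r in s'..s, ∫ u, Hk (k + 1) r u s y * ptil s' y' r u|
          = ‖∫ r in Set.Ioc s' s, (∫ u, Hk (k + 1) r u s y * ptil s' y' r u)‖ := by
            rw [intervalIntegral.integral_of_le hss.le, Real.norm_eq_abs]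
        _ ≤ ∫ r in Set.Ioc s' s, (A k * Cbar * K * phat d c s' s y' y)
              * (s - r) ^ (((k : ℝ) + 1) * (γ / 2) - 1) := by
            refine norm_integral_le_of_norm_le hGint ?_
            filter_upwards [haeset] with r hrmem
            exact (hinner r hrmem).2
        _ ≤ _ := htail
  -- Step 3: summability of the majorant series
  have hsumv : Summable (fun k : ℕ => A k * T ^ (((k : ℝ) + 1) * (γ / 2))) := by
    set q : ℝ := C * K * T ^ (γ / 2 : ℝ) with hqdef
    have hq : 0 < q := by positivity
    have hαtend : Tendsto (fun k : ℕ => ((k : ℝ) + 1) * (γ / 2)) atTop atTop := by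
      apply Tendsto.atTop_mul_const hβ0
      exact tendsto_atTop_add_const_right atTop 1 tendsto_natCast_atTop_atTop
    have hψ0 : Tendsto (fun k : ℕ => psiAux (γ / 2) (((k : ℝ) + 1) * (γ / 2)))
        atTop (𝓝 0) := by
      have h2 : Tendsto (fun k : ℕ => (1 / (γ / 2) + 1)
          * ((((k : ℝ) + 1) * (γ / 2)) ^ (-(γ / 2)))) atTop (𝓝 ((1 / (γ / 2) + 1) * 0)) :=
        ((tendsto_rpow_neg_atTop hβ0).comp hαtend).const_mul _
      rw [mul_zero] at h2
      refine h2.congr' ?_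
      filter_upwards [hαtend.eventually_gt_atTop 1] with k hk
      rw [psiAux, if_neg (not_le.2 hk)]
    have hev : ∀ᶠ k : ℕ in atTop, q * psiAux (γ / 2) (((k : ℝ) + 1) * (γ / 2)) ≤ 1 / 2 := by
      have h3 : Tendsto (fun k : ℕ => q * psiAux (γ / 2) (((k : ℝ) + 1) * (γ / 2)))
          atTop (𝓝 (q * 0)) := hψ0.const_mul q
      rw [mul_zero] at h3
      exact (h3.eventually_lt_const (by norm_num : (0:ℝ) < 1 / 2)).mono
        (fun k hk => hk.le)
    apply summable_of_ratio_norm_eventually_le (show (1/2:ℝ) < 1 by norm_num)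
    filter_upwards [hev] with k hk
    have hpos1 : 0 < A k * T ^ (((k : ℝ) + 1) * (γ / 2)) :=
      mul_pos (hApos k) (Real.rpow_pos_of_pos hT _)
    have hψpos : 0 < psiAux (γ / 2) (((k : ℝ) + 1) * (γ / 2)) :=
      psiAux_pos hβ0 (by positivity)
    have hpos2 : 0 < A (k + 1) * T ^ ((((k + 1 : ℕ) : ℝ) + 1) * (γ / 2)) :=
      mul_pos (hApos (k + 1)) (Real.rpow_pos_of_pos hT _)
    have hvsucc : A (k + 1) * T ^ ((((k + 1 : ℕ) : ℝ) + 1) * (γ / 2))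
        = (A k * T ^ (((k : ℝ) + 1) * (γ / 2)))
            * (q * psiAux (γ / 2) (((k : ℝ) + 1) * (γ / 2))) := by
      have e : ((((k + 1 : ℕ) : ℝ)) + 1) * (γ / 2) = ((k : ℝ) + 1) * (γ / 2) + γ / 2 := by
        push_cast; ring
      have hA1 : A (k + 1) = A k * (C * K * psiAux (γ / 2) (((k : ℝ) + 1) * (γ / 2))) := by
        rw [hAdef]; rfl
      rw [e, Real.rpow_add hT, hA1, hqdef]; ring
    rw [Real.norm_eq_abs, Real.norm_eq_abs, abs_of_pos hpos2, abs_of_pos hpos1, hvsucc]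
    calc (A k * T ^ (((k : ℝ) + 1) * (γ / 2)))
          * (q * psiAux (γ / 2) (((k : ℝ) + 1) * (γ / 2)))
        ≤ (A k * T ^ (((k : ℝ) + 1) * (γ / 2))) * (1 / 2) :=
          mul_le_mul_of_nonneg_left hk hpos1.le
      _ = 1 / 2 * (A k * T ^ (((k : ℝ) + 1) * (γ / 2))) := by ring
  have hVnn : (0:ℝ) ≤ ∑' k : ℕ, A k * T ^ (((k : ℝ) + 1) * (γ / 2)) :=
    tsum_nonneg (fun k => (mul_pos (hApos k) (Real.rpow_pos_of_pos hT _)).le)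
  constructor
  -- Part 1 : summability
  · intro s' s h0 hss hsT y' y
    have hP : 0 < phat d c s' s y' y := phat_pos hc hss y' y
    have hΔ0 : (0:ℝ) < s - s' := sub_pos.2 hss
    have hΔT : s - s' ≤ T := by linarith
    have hnn : ∀ k : ℕ,
        (0:ℝ) ≤ ∫ r in s'..s, ∫ u, |Hk (k + 1) r u s y| * |ptil s' y' r u| := fun k =>
      intervalIntegral.integral_nonneg hss.le (fun r _ => integral_nonneg
        (fun u => mul_nonneg (abs_nonneg _) (abs_nonneg _)))
    have hle : ∀ k : ℕ,
        (∫ r in s'..s, ∫ u, |Hk (k + 1) r u s y| * |ptil s' y' r u|)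
          ≤ ((Cbar * K / (γ / 2)) * phat d c s' s y' y)
              * (A k * T ^ (((k : ℝ) + 1) * (γ / 2))) := fun k => ?_
    case _ => exact Summable.of_nonneg_of_le hnn hle (hsumv.mul_left _)
    refine le_trans (hmain k s' s h0 hss hsT y' y).1 ?_
    have hrle : (s - s') ^ (((k : ℝ) + 1) * (γ / 2)) ≤ T ^ (((k : ℝ) + 1) * (γ / 2)) :=
      Real.rpow_le_rpow hΔ0.le hΔT (by positivity)
    calc (Cbar * K / (γ / 2)) * A k * (s - s') ^ (((k : ℝ) + 1) * (γ / 2))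
          * phat d c s' s y' y
        = ((Cbar * K / (γ / 2)) * A k * phat d c s' s y' y)
            * (s - s') ^ (((k : ℝ) + 1) * (γ / 2)) := by ring
      _ ≤ ((Cbar * K / (γ / 2)) * A k * phat d c s' s y' y)
            * T ^ (((k : ℝ) + 1) * (γ / 2)) := by
          apply mul_le_mul_of_nonneg_left hrle
          exact mul_nonneg (mul_nonneg (by positivity) (hApos k).le) hP.le
      _ = ((Cbar * K / (γ / 2)) * phat d c s' s y' y)
            * (A k * T ^ (((k : ℝ) + 1) * (γ / 2))) := by ring
  -- Part 2 : the final bound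
  · refine ⟨Cbar + (Cbar * K / (γ / 2)) * (∑' k : ℕ, A k * T ^ (((k : ℝ) + 1) * (γ / 2))),
      ?_, ?_⟩
    · have : (0:ℝ) ≤ (Cbar * K / (γ / 2))
          * (∑' k : ℕ, A k * T ^ (((k : ℝ) + 1) * (γ / 2))) :=
        mul_nonneg (by positivity) hVnn
      linarith
    intro s' s h0 hss hsT y' y
    have hP : 0 < phat d c s' s y' y := phat_pos hc hss y' y
    have hΔ0 : (0:ℝ) < s - s' := sub_pos.2 hss
    have hΔT : s - s' ≤ T := by linarith
    have hSb : ∀ k : ℕ, |∫ r in s'..s, ∫ u, Hk (k + 1) r u s y * ptil s' y' r u|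
        ≤ ((Cbar * K / (γ / 2)) * phat d c s' s y' y)
            * (A k * T ^ (((k : ℝ) + 1) * (γ / 2))) := by
      intro k
      refine le_trans (hmain k s' s h0 hss hsT y' y).2 ?_
      have hrle : (s - s') ^ (((k : ℝ) + 1) * (γ / 2)) ≤ T ^ (((k : ℝ) + 1) * (γ / 2)) :=
        Real.rpow_le_rpow hΔ0.le hΔT (by positivity)
      calc (Cbar * K / (γ / 2)) * A k * (s - s') ^ (((k : ℝ) + 1) * (γ / 2))
            * phat d c s' s y' y
          = ((Cbar * K / (γ / 2)) * A k * phat d c s' s y' y)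
              * (s - s') ^ (((k : ℝ) + 1) * (γ / 2)) := by ring
        _ ≤ ((Cbar * K / (γ / 2)) * A k * phat d c s' s y' y)
              * T ^ (((k : ℝ) + 1) * (γ / 2)) := by
            apply mul_le_mul_of_nonneg_left hrle
            exact mul_nonneg (mul_nonneg (by positivity) (hApos k).le) hP.le
        _ = ((Cbar * K / (γ / 2)) * phat d c s' s y' y)
              * (A k * T ^ (((k : ℝ) + 1) * (γ / 2))) := by ring
    have hBtsum : Summable (fun k : ℕ => ((Cbar * K / (γ / 2)) * phat d c s' s y' y)
        * (A k * T ^ (((k : ℝ) + 1) * (γ / 2)))) := hsumv.mul_left _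
    have hnormsum : Summable (fun k : ℕ =>
        ‖∫ r in s'..s, ∫ u, Hk (k + 1) r u s y * ptil s' y' r u‖) :=
      Summable.of_nonneg_of_le (fun k => norm_nonneg _)
        (fun k => by rw [Real.norm_eq_abs]; exact hSb k) hBtsum
    calc |ptil s' y' s y + ∑' k : ℕ, ∫ r in s'..s, ∫ u, Hk (k + 1) r u s y * ptil s' y' r u|
        ≤ |ptil s' y' s y|
            + ‖∑' k : ℕ, ∫ r in s'..s, ∫ u, Hk (k + 1) r u s y * ptil s' y' r u‖ := by
          rw [Real.norm_eq_abs]; exact abs_add_le _ _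
      _ ≤ Cbar * phat d c s' s y' y
            + ∑' k : ℕ, ‖∫ r in s'..s, ∫ u, Hk (k + 1) r u s y * ptil s' y' r u‖ :=
          add_le_add (hptil s' s h0 hss hsT y' y) (norm_tsum_le_tsum_norm hnormsum)
      _ ≤ Cbar * phat d c s' s y' y
            + ∑' k : ℕ, ((Cbar * K / (γ / 2)) * phat d c s' s y' y)
                * (A k * T ^ (((k : ℝ) + 1) * (γ / 2))) :=
          add_le_add_right (Summable.tsum_le_tsum
            (fun k => by rw [Real.norm_eq_abs]; exact hSb k) hnormsum hBtsum) _
      _ = Cbar * phat d c s' s y' y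
            + ((Cbar * K / (γ / 2)) * phat d c s' s y' y)
                * (∑' k : ℕ, A k * T ^ (((k : ℝ) + 1) * (γ / 2))) := by
          rw [tsum_mul_left]
      _ = (Cbar + (Cbar * K / (γ / 2))
            * (∑' k : ℕ, A k * T ^ (((k : ℝ) + 1) * (γ / 2)))) * phat d c s' s y' y := by
          ring
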